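/- Let ⃗e' ≤ ⃗e be nondecreasing integer sequences of length k with equal sum, where ≤ is the dominance order (all initial partial sums of ⃗e' are ≤ those of ⃗e). Then u(⃗e') ≥ u(⃗e), where u(⃗f) = Σ_{1≤i<j≤k} max{0, f_j − f_i − 1}, with equality iff ⃗e' = ⃗e. -/
import Mathlib


/-- The invariant `u(⃗e) = ∑_{1 ≤ i < j ≤ k} max {0, e_j - e_i - 1}` of a splitting
sequence, indexed over positions `1, …, k`. -/
def uInv (k : ℕ) (e : ℕ → ℤ) : ℤ :=
  ∑ i ∈ Finset.Icc 1 k, ∑ j ∈ Finset.Icc 1 k, if i < j then max 0 (e j - e i - 1) else 0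

/-- If `⃗e' ≤ ⃗e` in the dominance order (all initial partial sums of `⃗e'`
at most those of `⃗e`, equal total sums, both nondecreasing of length `k`), then
`u(⃗e') ≥ u(⃗e)`, with equality iff `⃗e' = ⃗e`. -/
lemma sum_sq_decomp (s : Finset ℕ) (p q : ℕ)
    (hp : p ∈ s) (hq : q ∈ s) (hpq : p ≠ q) (f : ℕ → ℕ → ℤ) :
    ∑ i ∈ s, ∑ j ∈ s, f i j =
      (∑ i ∈ (s.erase p).erase q, ∑ j ∈ (s.erase p).erase q, f i j)
      + (∑ i ∈ (s.erase p).erase q, (f i p + f i q + f p i + f q i))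
      + (f p p + f p q + f q p + f q q) := by
  set t := (s.erase p).erase q with ht
  have hq' : q ∉ t := Finset.notMem_erase _ _
  have hp' : p ∉ insert q t := by
    simp only [Finset.mem_insert, ht, Finset.mem_erase]
    tauto
  have hs : s = insert p (insert q t) := by
    rw [ht, Finset.insert_erase (by rw [Finset.mem_erase]; exact ⟨Ne.symm hpq, hq⟩),
      Finset.insert_erase hp]
  rw [hs]
  simp only [Finset.sum_insert hp', Finset.sum_insert hq', Finset.sum_add_distrib]
  ring

lemma sp_move (e : ℕ → ℤ) (p q l : ℕ) (hp1 : 1 ≤ p) (hq1 : 1 ≤ q) (hpq : p ≠ q) :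
    ∑ i ∈ Finset.Icc 1 l, (fun i => if i = p then e p - 1 else if i = q then e q + 1 else e i) i
      = (∑ i ∈ Finset.Icc 1 l, e i) + ((if p ≤ l then (-1:ℤ) else 0) + (if q ≤ l then (1:ℤ) else 0)) := by
  have : ∀ i ∈ Finset.Icc 1 l,
      (if i = p then e p - 1 else if i = q then e q + 1 else e i)
        = e i + ((if i = p then (-1:ℤ) else 0) + (if i = q then (1:ℤ) else 0)) := by
    intro i _
    by_cases h1 : i = p
    · subst h1; simp [hpq]; ring
    · by_cases h2 : i = q
      · subst h2; simp [Ne.symm hpq, h1]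
      · simp [h1, h2]
  rw [Finset.sum_congr rfl this, Finset.sum_add_distrib, Finset.sum_add_distrib,
    Finset.sum_ite_eq' (Finset.Icc 1 l) p (fun _ => (-1:ℤ)),
    Finset.sum_ite_eq' (Finset.Icc 1 l) q (fun _ => (1:ℤ))]
  simp [Finset.mem_Icc, hp1, hq1]

lemma move_lemma (k p q : ℕ) (e : ℕ → ℤ)
    (hp : p ∈ Finset.Icc 1 k) (hq : q ∈ Finset.Icc 1 k) (hpq : p < q)
    (hmono : ∀ i j, 1 ≤ i → i ≤ j → j ≤ k → e i ≤ e j) :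
    uInv k e + 1 ≤ uInv k (fun i => if i = p then e p - 1 else if i = q then e q + 1 else e i) := by
  rw [Finset.mem_Icc] at hp hq
  obtain ⟨hp1, hpk⟩ := hp
  obtain ⟨hq1, hqk⟩ := hq
  have hpq' : p ≠ q := Nat.ne_of_lt hpq
  set E : ℕ → ℤ := fun i => if i = p then e p - 1 else if i = q then e q + 1 else e i with hE
  have hEp : E p = e p - 1 := by simp [hE]
  have hEq : E q = e q + 1 := by simp [hE, hpq'.symm]
  have hEi : ∀ i, i ≠ p → i ≠ q → E i = e i := by
    intro i h1 h2; simp [hE, h1, h2]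
  have hepq : e p ≤ e q := hmono p q hp1 (le_of_lt hpq) hqk
  unfold uInv
  rw [sum_sq_decomp (Finset.Icc 1 k) p q (Finset.mem_Icc.mpr ⟨hp1, hpk⟩)
      (Finset.mem_Icc.mpr ⟨hq1, hqk⟩) hpq' (fun i j => if i < j then max 0 (e j - e i - 1) else 0),
    sum_sq_decomp (Finset.Icc 1 k) p q (Finset.mem_Icc.mpr ⟨hp1, hpk⟩)
      (Finset.mem_Icc.mpr ⟨hq1, hqk⟩) hpq' (fun i j => if i < j then max 0 (E j - E i - 1) else 0)]
  set t := ((Finset.Icc 1 k).erase p).erase q with ht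
  have hmem : ∀ i ∈ t, i ≠ q ∧ i ≠ p ∧ 1 ≤ i ∧ i ≤ k := by
    intro i hi
    rw [ht, Finset.mem_erase, Finset.mem_erase, Finset.mem_Icc] at hi
    tauto
  have htsum : (∑ i ∈ t, ∑ j ∈ t, (fun i j => if i < j then max 0 (E j - E i - 1) else 0) i j)
      = ∑ i ∈ t, ∑ j ∈ t, (fun i j => if i < j then max 0 (e j - e i - 1) else 0) i j := by
    apply Finset.sum_congr rfl; intro i hi
    apply Finset.sum_congr rfl; intro j hj
    obtain ⟨hiq, hip, -, -⟩ := hmem i hi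
    obtain ⟨hjq, hjp, -, -⟩ := hmem j hj
    simp only [hEi i hip hiq, hEi j hjp hjq]
  have hrows : (∑ i ∈ t, ((fun i j => if i < j then max 0 (e j - e i - 1) else 0) i p
        + (fun i j => if i < j then max 0 (e j - e i - 1) else 0) i q
        + (fun i j => if i < j then max 0 (e j - e i - 1) else 0) p i
        + (fun i j => if i < j then max 0 (e j - e i - 1) else 0) q i))
      ≤ ∑ i ∈ t, ((fun i j => if i < j then max 0 (E j - E i - 1) else 0) i p
        + (fun i j => if i < j then max 0 (E j - E i - 1) else 0) i q
        + (fun i j => if i < j then max 0 (E j - E i - 1) else 0) p i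
        + (fun i j => if i < j then max 0 (E j - E i - 1) else 0) q i) := by
    apply Finset.sum_le_sum
    intro i hi
    obtain ⟨hiq, hip, hi1, hik⟩ := hmem i hi
    simp only [hEp, hEq, hEi i hip hiq]
    rcases lt_trichotomy i p with h | h | h
    · have m1 : e i ≤ e p := hmono i p hi1 (le_of_lt h) hpk
      have m2 : e i ≤ e q := hmono i q hi1 (by omega) hqk
      split_ifs <;> omega
    · omega
    · rcases lt_trichotomy i q with h' | h' | h'
      · have m1 : e p ≤ e i := hmono p i hp1 (le_of_lt h) hik
        have m2 : e i ≤ e q := hmono i q hi1 (le_of_lt h') hqk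
        split_ifs <;> omega
      · omega
      · have m1 : e p ≤ e i := hmono p i hp1 (le_of_lt h) hik
        have m2 : e q ≤ e i := hmono q i hq1 (le_of_lt h') hik
        split_ifs <;> omega
  have hcorner : ((fun i j => if i < j then max 0 (e j - e i - 1) else 0) p p
      + (fun i j => if i < j then max 0 (e j - e i - 1) else 0) p q
      + (fun i j => if i < j then max 0 (e j - e i - 1) else 0) q p
      + (fun i j => if i < j then max 0 (e j - e i - 1) else 0) q q) + 1
      ≤ ((fun i j => if i < j then max 0 (E j - E i - 1) else 0) p p
      + (fun i j => if i < j then max 0 (E j - E i - 1) else 0) p q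
      + (fun i j => if i < j then max 0 (E j - E i - 1) else 0) q p
      + (fun i j => if i < j then max 0 (E j - E i - 1) else 0) q q) := by
    simp only [hEp, hEq]
    split_ifs <;> omega
  simp only at htsum hrows hcorner ⊢
  linarith

lemma eq_of_sp (k : ℕ) (e e' : ℕ → ℤ)
    (h : ∀ l ∈ Finset.Icc 1 k, (∑ i ∈ Finset.Icc 1 l, e' i) = ∑ i ∈ Finset.Icc 1 l, e i) :
    ∀ i ∈ Finset.Icc 1 k, e' i = e i := by
  intro i hi
  rw [Finset.mem_Icc] at hi
  obtain ⟨h1, h2⟩ := hi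
  obtain ⟨m, rfl⟩ : ∃ m, i = m + 1 := ⟨i - 1, by omega⟩
  have hm : (∑ j ∈ Finset.Icc 1 m, e' j) = ∑ j ∈ Finset.Icc 1 m, e j := by
    rcases Nat.eq_zero_or_pos m with hm0 | hm0
    · subst hm0; simp
    · exact h m (Finset.mem_Icc.mpr ⟨hm0, by omega⟩)
  have h3 := h (m + 1) (Finset.mem_Icc.mpr ⟨by omega, h2⟩)
  rw [Finset.sum_Icc_succ_top (by omega : 1 ≤ m + 1) e',
    Finset.sum_Icc_succ_top (by omega : 1 ≤ m + 1) e, hm] at h3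
  linarith

lemma uInv_congr (k : ℕ) (e e' : ℕ → ℤ) (h : ∀ i ∈ Finset.Icc 1 k, e' i = e i) :
    uInv k e' = uInv k e := by
  unfold uInv
  apply Finset.sum_congr rfl; intro i hi
  apply Finset.sum_congr rfl; intro j hj
  rw [h i hi, h j hj]

lemma aux (k : ℕ) : ∀ n : ℕ, ∀ e e' : ℕ → ℤ,
    (∀ i j, 1 ≤ i → i ≤ j → j ≤ k → e i ≤ e j) →
    (∀ i j, 1 ≤ i → i ≤ j → j ≤ k → e' i ≤ e' j) →
    (∀ l ∈ Finset.Icc 1 k, ∑ i ∈ Finset.Icc 1 l, e' i ≤ ∑ i ∈ Finset.Icc 1 l, e i) →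
    (∑ i ∈ Finset.Icc 1 k, e' i = ∑ i ∈ Finset.Icc 1 k, e i) →
    (∑ l ∈ Finset.Icc 1 k, ((∑ i ∈ Finset.Icc 1 l, e i) - ∑ i ∈ Finset.Icc 1 l, e' i)) ≤ (n : ℤ) →
    uInv k e ≤ uInv k e' ∧ (uInv k e' = uInv k e → ∀ i ∈ Finset.Icc 1 k, e' i = e i) := by
  intro n
  induction n with
  | zero =>
    intro e e' hm hm' hd hs hD
    have hnn : ∀ l ∈ Finset.Icc 1 k, 0 ≤ (∑ i ∈ Finset.Icc 1 l, e i) - ∑ i ∈ Finset.Icc 1 l, e' i :=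
      fun l hl => sub_nonneg.mpr (hd l hl)
    have hz : ∑ l ∈ Finset.Icc 1 k, ((∑ i ∈ Finset.Icc 1 l, e i) - ∑ i ∈ Finset.Icc 1 l, e' i) = 0 :=
      le_antisymm (by exact_mod_cast hD) (Finset.sum_nonneg hnn)
    have heq : ∀ l ∈ Finset.Icc 1 k, (∑ i ∈ Finset.Icc 1 l, e' i) = ∑ i ∈ Finset.Icc 1 l, e i := by
      intro l hl
      have := (Finset.sum_eq_zero_iff_of_nonneg hnn).mp hz l hl
      linarith
    have hee := eq_of_sp k e e' heq
    exact ⟨(uInv_congr k e e' hee).symm.le, fun _ => hee⟩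
  | succ n ih =>
    intro e e' hm hm' hd hs hD
    by_cases hee : ∀ i ∈ Finset.Icc 1 k, e' i = e i
    · exact ⟨(uInv_congr k e e' hee).symm.le, fun _ => hee⟩
    · -- find p
      push_neg at hee
      have hA : ((Finset.Icc 1 k).filter (fun l => e' l ≠ e l)).Nonempty := by
        obtain ⟨i, hi, hne⟩ := hee
        exact ⟨i, Finset.mem_filter.mpr ⟨hi, hne⟩⟩
      set p := ((Finset.Icc 1 k).filter (fun l => e' l ≠ e l)).min' hA with hpdef
      have hpmem := ((Finset.Icc 1 k).filter (fun l => e' l ≠ e l)).min'_mem hA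
      rw [Finset.mem_filter, Finset.mem_Icc] at hpmem
      obtain ⟨⟨hp1, hpk⟩, hpne⟩ := hpmem
      rw [← hpdef] at hpne hp1 hpk
      have hpt : ∀ l, 1 ≤ l → l ≤ k → l < p → e' l = e l := by
        intro l h1 h2 h3
        by_contra hc
        have : p ≤ l := Finset.min'_le _ l (Finset.mem_filter.mpr ⟨Finset.mem_Icc.mpr ⟨h1, h2⟩, hc⟩)
        omega
      have hpre : ∀ l, l < p → (∑ i ∈ Finset.Icc 1 l, e' i) = ∑ i ∈ Finset.Icc 1 l, e i := by
        intro l hl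
        apply Finset.sum_congr rfl
        intro i hi
        rw [Finset.mem_Icc] at hi
        exact hpt i hi.1 (by omega) (by omega)
      have hstep : ∀ (f : ℕ → ℤ) (m : ℕ),
          (∑ i ∈ Finset.Icc 1 (m + 1), f i) = (∑ i ∈ Finset.Icc 1 m, f i) + f (m + 1) :=
        fun f m => Finset.sum_Icc_succ_top (by omega) f
      have hpe : e' p < e p := by
        obtain ⟨m, hmp⟩ : ∃ m, p = m + 1 := ⟨p - 1, by omega⟩
        have h1 := hd p (Finset.mem_Icc.mpr ⟨hp1, hpk⟩)
        rw [hmp, hstep e' m, hstep e m, hpre m (by omega)] at h1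
        rw [hmp] at hpne ⊢
        omega
      have hSp : (∑ i ∈ Finset.Icc 1 p, e' i) < ∑ i ∈ Finset.Icc 1 p, e i := by
        obtain ⟨m, hmp⟩ : ∃ m, p = m + 1 := ⟨p - 1, by omega⟩
        have := hpe
        rw [hmp] at this ⊢
        rw [hstep e' m, hstep e m, hpre m (by omega)]
        linarith
      have hpk' : p < k := by
        rcases lt_or_eq_of_le hpk with h | h
        · exact h
        · exfalso; rw [h] at hSp; omega
      -- find q
      have hB : ((Finset.Icc 1 k).filter (fun l => p < l ∧
          (∑ i ∈ Finset.Icc 1 l, e' i) = ∑ i ∈ Finset.Icc 1 l, e i)).Nonempty :=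
        ⟨k, Finset.mem_filter.mpr ⟨Finset.mem_Icc.mpr ⟨by omega, le_refl k⟩, hpk', hs⟩⟩
      set q := ((Finset.Icc 1 k).filter (fun l => p < l ∧
          (∑ i ∈ Finset.Icc 1 l, e' i) = ∑ i ∈ Finset.Icc 1 l, e i)).min' hB with hqdef
      have hqmem := Finset.min'_mem _ hB
      rw [Finset.mem_filter, Finset.mem_Icc] at hqmem
      obtain ⟨⟨hq1, hqk⟩, hpq, hSq⟩ := hqmem
      rw [← hqdef] at hq1 hqk hpq hSq
      have hstrict : ∀ l, p ≤ l → l < q →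
          (∑ i ∈ Finset.Icc 1 l, e' i) ≤ (∑ i ∈ Finset.Icc 1 l, e i) - 1 := by
        intro l h1 h2
        rcases eq_or_lt_of_le h1 with h | h
        · rw [← h]; omega
        · have hl : l ∈ Finset.Icc 1 k := Finset.mem_Icc.mpr ⟨by omega, by omega⟩
          have h3 := hd l hl
          rcases lt_or_eq_of_le h3 with h4 | h4
          · omega
          · exfalso
            have : q ≤ l := Finset.min'_le _ l (Finset.mem_filter.mpr ⟨hl, h, h4⟩)
            omega
      have hq'val : e q + 1 ≤ e' q := by
        obtain ⟨m, hmq⟩ : ∃ m, q = m + 1 := ⟨q - 1, by omega⟩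
        have h1 := hstrict m (by omega) (by omega)
        have h2 := hSq
        rw [hmq, hstep e' m, hstep e m] at h2
        rw [hmq]
        linarith
      have hbdry1 : 1 < p → e (p - 1) ≤ e p - 1 := by
        intro h
        have h1 : e' (p - 1) = e (p - 1) := hpt (p - 1) (by omega) (by omega) (by omega)
        have h2 : e' (p - 1) ≤ e' p := hm' (p - 1) p (by omega) (by omega) hpk
        omega
      have hbdry2 : q < k → e q + 1 ≤ e (q + 1) := by
        intro h
        have h1 : e' q ≤ e' (q + 1) := hm' q (q + 1) (by omega) (by omega) (by omega)
        have h2 := hd (q + 1) (Finset.mem_Icc.mpr ⟨by omega, by omega⟩)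
        rw [hstep e' q, hstep e q] at h2
        have h3 : e' (q + 1) ≤ e (q + 1) := by omega
        omega
      set E : ℕ → ℤ := fun i => if i = p then e p - 1 else if i = q then e q + 1 else e i with hE
      have hEmono : ∀ i j, 1 ≤ i → i ≤ j → j ≤ k → E i ≤ E j := by
        intro i j hi1 hij hjk
        rw [hE]
        simp only
        by_cases h1 : i = p
        · by_cases h2 : j = p
          · simp [h1, h2]
          · by_cases h3 : j = q
            · simp only [if_pos h1, if_neg h2, if_pos h3]
              have := hm p q hp1 (by omega) hqk
              omega
            · simp only [if_pos h1, if_neg h2, if_neg h3]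
              have := hm p j hp1 (by omega) hjk
              omega
        · by_cases h1' : i = q
          · by_cases h2 : j = p
            · omega
            · by_cases h3 : j = q
              · simp [h1', h3]
              · simp only [if_neg h1, if_pos h1', if_neg h2, if_neg h3]
                have hq' : q < j := by omega
                have := hm (q + 1) j (by omega) (by omega) hjk
                have := hbdry2 (by omega)
                omega
          · by_cases h2 : j = p
            · simp only [if_neg h1, if_neg h1', if_pos h2]
              have hip : i < p := by omega
              have := hm i (p - 1) hi1 (by omega) (by omega)
              have := hbdry1 (by omega)
              omega
            · by_cases h3 : j = q
              · simp only [if_neg h1, if_neg h1', if_neg h2, if_pos h3]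
                have := hm i q hi1 (by omega) hqk
                omega
              · simp only [if_neg h1, if_neg h1', if_neg h2, if_neg h3]
                exact hm i j hi1 hij hjk
      have hSE : ∀ l : ℕ, (∑ i ∈ Finset.Icc 1 l, E i)
          = (∑ i ∈ Finset.Icc 1 l, e i)
            + ((if p ≤ l then (-1 : ℤ) else 0) + (if q ≤ l then (1 : ℤ) else 0)) := by
        intro l
        rw [hE]
        exact sp_move e p q l hp1 hq1 (by omega)
      have hEdom : ∀ l ∈ Finset.Icc 1 k,
          (∑ i ∈ Finset.Icc 1 l, e' i) ≤ ∑ i ∈ Finset.Icc 1 l, E i := by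
        intro l hl
        rw [Finset.mem_Icc] at hl
        rw [hSE l]
        by_cases h1 : q ≤ l
        · simp only [if_pos (by omega : p ≤ l), if_pos h1]
          have := hd l (Finset.mem_Icc.mpr hl)
          linarith
        · by_cases h2 : p ≤ l
          · simp only [if_pos h2, if_neg h1]
            have := hstrict l h2 (by omega)
            linarith
          · simp only [if_neg h2, if_neg h1]
            have := hd l (Finset.mem_Icc.mpr hl)
            linarith
      have hEsum : (∑ i ∈ Finset.Icc 1 k, e' i) = ∑ i ∈ Finset.Icc 1 k, E i := by
        rw [hSE k]
        simp only [if_pos hpk, if_pos hqk]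
        linarith
      have hED : (∑ l ∈ Finset.Icc 1 k,
          ((∑ i ∈ Finset.Icc 1 l, E i) - ∑ i ∈ Finset.Icc 1 l, e' i)) ≤ (n : ℤ) := by
        have hsplit : ∀ l ∈ Finset.Icc 1 k,
            ((∑ i ∈ Finset.Icc 1 l, E i) - ∑ i ∈ Finset.Icc 1 l, e' i)
            = ((∑ i ∈ Finset.Icc 1 l, e i) - ∑ i ∈ Finset.Icc 1 l, e' i)
              + ((if p ≤ l then (-1 : ℤ) else 0) + (if q ≤ l then (1 : ℤ) else 0)) := by
          intro l _
          rw [hSE l]; ring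
        rw [Finset.sum_congr rfl hsplit, Finset.sum_add_distrib]
        have hcorr : (∑ l ∈ Finset.Icc 1 k,
            ((if p ≤ l then (-1 : ℤ) else 0) + (if q ≤ l then (1 : ℤ) else 0))) ≤ -1 := by
          have hpIcc : p ∈ Finset.Icc 1 k := Finset.mem_Icc.mpr ⟨hp1, hpk⟩
          rw [← Finset.sum_erase_add _ _ hpIcc]
          have h1 : (∑ l ∈ (Finset.Icc 1 k).erase p,
              ((if p ≤ l then (-1 : ℤ) else 0) + (if q ≤ l then (1 : ℤ) else 0))) ≤ 0 := by
            apply Finset.sum_nonpos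
            intro l _
            by_cases h : q ≤ l
            · simp only [if_pos h, if_pos (by omega : p ≤ l)]; norm_num
            · by_cases h2 : p ≤ l <;> simp [h, h2]
          have h2 : ((if p ≤ p then (-1 : ℤ) else 0) + (if q ≤ p then (1 : ℤ) else 0)) = -1 := by
            simp [le_refl, not_le.mpr hpq]
          omega
        push_cast at hD ⊢
        linarith
      have hmv := move_lemma k p q e (Finset.mem_Icc.mpr ⟨hp1, hpk⟩)
        (Finset.mem_Icc.mpr ⟨hq1, hqk⟩) hpq hm
      rw [← hE] at hmv
      obtain ⟨ihle, -⟩ := ih E e' hEmono hm' hEdom hEsum hED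
      constructor
      · linarith
      · intro h
        exfalso
        linarith


theorem stmt19 (k : ℕ) (e e' : ℕ → ℤ)
    (hmono : ∀ i j, 1 ≤ i → i ≤ j → j ≤ k → e i ≤ e j)
    (hmono' : ∀ i j, 1 ≤ i → i ≤ j → j ≤ k → e' i ≤ e' j)
    (hdom : ∀ l ∈ Finset.Icc 1 k, ∑ i ∈ Finset.Icc 1 l, e' i ≤ ∑ i ∈ Finset.Icc 1 l, e i)
    (hsum : ∑ i ∈ Finset.Icc 1 k, e' i = ∑ i ∈ Finset.Icc 1 k, e i) :
    uInv k e ≤ uInv k e' ∧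
      (uInv k e' = uInv k e ↔ ∀ i ∈ Finset.Icc 1 k, e' i = e i) := by
  set D := ∑ l ∈ Finset.Icc 1 k, ((∑ i ∈ Finset.Icc 1 l, e i) - ∑ i ∈ Finset.Icc 1 l, e' i) with hDdef
  obtain ⟨h1, h2⟩ := aux k D.toNat e e' hmono hmono' hdom hsum (Int.self_le_toNat D)
  exact ⟨h1, ⟨h2, fun h => uInv_congr k e e' h⟩⟩
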